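/- Uniqueness and characterization of the equilibrium flow in the Logit case (part of Theorem 3(iii)): assume n x > 0 for all x and m y > 0 for all y. For a feasible flow (μˢ, μᵈ), set μ_{x0} = n x − ∑_z μˢ x z and μ_{0y} = m y − ∑_z μᵈ z y, and define the entropic welfare S(μˢ, μᵈ) = ∑_{x,z} μˢ x z · α x z + ∑_{z,y} μᵈ z y · γ z y − ∑_x (∑_z μˢ x z · log(μˢ x z / n x) + μ_{x0} · log(μ_{x0} / n x)) − ∑_y (∑_z μᵈ z y · log(μᵈ z y / m y) + μ_{0y} · log(μ_{0y} / m y)), with the convention 0 · log 0 = 0. Then S attains its maximum over the set of feasible flows at exactly one feasible flow (μˢ*, μᵈ*); moreover, for any p* minimizing W(p) = ∑_x n x · log(1 + ∑_z exp(α x z + p z)) + ∑_y m y · log(1 + ∑_z exp(γ z y − p z)) over p : Z → ℝ, the maximizer is given by μˢ* x z = n x · exp(α x z + p* z)/(1 + ∑_{z'} exp(α x z' + p* z')) and μᵈ* z y = m y · exp(γ z y − p* z)/(1 + ∑_{z'} exp(γ z' y − p* z')). -/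

import Mathlib

open Finset MeasureTheory Real

section AuxForLogit

open Finset Real Filter

noncomputable def Dkl (a b : ℝ) : ℝ := a * Real.log (a / b) - a + b

lemma Dkl_nonneg {a b : ℝ} (ha : 0 ≤ a) (hb : 0 < b) : 0 ≤ Dkl a b := by
  rcases ha.eq_or_lt with h | h
  · simp [Dkl, ← h]; positivity
  · have h1 : Real.log (b / a) ≤ b / a - 1 := Real.log_le_sub_one_of_pos (div_pos hb h)
    have h2 : Real.log (a / b) = -Real.log (b / a) := by
      rw [← Real.log_inv]; congr 1; field_simp
    have := mul_le_mul_of_nonneg_left h1 h.le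
    rw [Dkl, h2]
    have hne : a ≠ 0 := h.ne'
    have : a * (b / a - 1) = b - a := by field_simp
    nlinarith [mul_le_mul_of_nonneg_left h1 ha]

lemma Dkl_pos {a b : ℝ} (ha : 0 ≤ a) (hb : 0 < b) (hne : a ≠ b) : 0 < Dkl a b := by
  rcases ha.eq_or_lt with h | h
  · simp [Dkl, ← h]
    exact hb
  · have h1 : Real.log (b / a) < b / a - 1 := by
      apply Real.log_lt_sub_one_of_pos (div_pos hb h)
      intro hc
      exact hne (by field_simp at hc; linarith)
    have h2 : Real.log (a / b) = -Real.log (b / a) := by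
      rw [← Real.log_inv]; congr 1; field_simp
    rw [Dkl, h2]
    have : a * (b / a - 1) = b - a := by field_simp
    nlinarith [mul_lt_mul_of_pos_left h1 h]

lemma Dkl_self {b : ℝ} (hb : 0 < b) : Dkl b b = 0 := by
  simp [Dkl, div_self hb.ne']

lemma eq_of_Dkl_eq_zero {a b : ℝ} (ha : 0 ≤ a) (hb : 0 < b) (h : Dkl a b = 0) : a = b := by
  by_contra hne
  exact absurd h (Dkl_pos ha hb hne).ne'

lemma point_id {a N s : ℝ} (c' : ℝ) (ha : 0 ≤ a) (hN : 0 < N) (hs : 0 < s) :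
    a * Real.log (a / (N * (Real.exp c' / s))) =
      a * Real.log (a / N) - a * c' + a * Real.log s := by
  rcases ha.eq_or_lt with h | h
  · simp [← h]
  · have hb : 0 < N * (Real.exp c' / s) := by positivity
    rw [Real.log_div h.ne' hb.ne', Real.log_div h.ne' hN.ne',
      Real.log_mul hN.ne' (by positivity), Real.log_div (Real.exp_ne_zero _) hs.ne',
      Real.log_exp]
    ring

variable {ι : Type*} [Fintype ι]

/-- one "block" expression: expected payoff minus entropy for one agent type. -/
noncomputable def blockG (N : ℝ) (c μ : ι → ℝ) : ℝ :=
  (∑ i, μ i * c i) - ((∑ i, μ i * Real.log (μ i / N)) +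
    (N - ∑ i, μ i) * Real.log ((N - ∑ i, μ i) / N))

lemma sexp_pos (c : ι → ℝ) : 0 < 1 + ∑ j, Real.exp (c j) := by positivity

lemma block_id (N : ℝ) (hN : 0 < N) (c μ : ι → ℝ) (hμ : ∀ i, 0 ≤ μ i)
    (hsum : ∑ i, μ i ≤ N) :
    (∑ i, Dkl (μ i) (N * (Real.exp (c i) / (1 + ∑ j, Real.exp (c j))))) +
      Dkl (N - ∑ i, μ i) (N * (1 / (1 + ∑ j, Real.exp (c j)))) =
    N * Real.log (1 + ∑ j, Real.exp (c j)) - blockG N c μ := by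
  set s := 1 + ∑ j, Real.exp (c j) with hs_def
  have hs : 0 < s := sexp_pos c
  have h1 : ∀ i ∈ Finset.univ, Dkl (μ i) (N * (Real.exp (c i) / s)) =
      μ i * Real.log (μ i / N) - μ i * c i + μ i * Real.log s - μ i +
        N * (Real.exp (c i) / s) := by
    intro i _
    rw [Dkl, point_id (c i) (hμ i) hN hs]
  have h2 : Dkl (N - ∑ i, μ i) (N * (1 / s)) =
      (N - ∑ i, μ i) * Real.log ((N - ∑ i, μ i) / N) +
        (N - ∑ i, μ i) * Real.log s - (N - ∑ i, μ i) + N * (1 / s) := by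
    have := point_id (a := N - ∑ i, μ i) (N := N) (s := s) 0 (by linarith) hN hs
    rw [Real.exp_zero] at this
    rw [Dkl, this]; ring
  rw [Finset.sum_congr rfl h1, h2, blockG]
  have e1 : ∑ i, (μ i * Real.log (μ i / N) - μ i * c i + μ i * Real.log s - μ i +
      N * (Real.exp (c i) / s)) =
      (∑ i, μ i * Real.log (μ i / N)) - (∑ i, μ i * c i) +
        (∑ i, μ i) * Real.log s - (∑ i, μ i) + N * ((∑ i, Real.exp (c i)) / s) := by
    rw [Finset.sum_add_distrib, Finset.sum_sub_distrib, Finset.sum_add_distrib,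
      Finset.sum_sub_distrib, ← Finset.sum_mul, ← Finset.mul_sum, ← Finset.sum_div]
  rw [e1]
  have hE : (∑ j, Real.exp (c j)) = s - 1 := by rw [hs_def]; ring
  rw [hE]
  field_simp
  ring

lemma blockG_le (N : ℝ) (hN : 0 < N) (c μ : ι → ℝ) (hμ : ∀ i, 0 ≤ μ i)
    (hsum : ∑ i, μ i ≤ N) :
    blockG N c μ ≤ N * Real.log (1 + ∑ j, Real.exp (c j)) := by
  have hs : 0 < 1 + ∑ j, Real.exp (c j) := sexp_pos c
  have hid := block_id N hN c μ hμ hsum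
  have h1 : 0 ≤ ∑ i, Dkl (μ i) (N * (Real.exp (c i) / (1 + ∑ j, Real.exp (c j)))) :=
    Finset.sum_nonneg fun i _ => Dkl_nonneg (hμ i) (by positivity)
  have h2 : 0 ≤ Dkl (N - ∑ i, μ i) (N * (1 / (1 + ∑ j, Real.exp (c j)))) :=
    Dkl_nonneg (by linarith) (by positivity)
  linarith

lemma blockG_sum_eq (N : ℝ) (c : ι → ℝ) :
    ∑ i, N * (Real.exp (c i) / (1 + ∑ j, Real.exp (c j))) =
      N * (1 - 1 / (1 + ∑ j, Real.exp (c j))) := by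
  have hs : 0 < 1 + ∑ j, Real.exp (c j) := sexp_pos c
  rw [← Finset.mul_sum, ← Finset.sum_div]
  field_simp
  ring

lemma blockG_eq_of (N : ℝ) (hN : 0 < N) (c μ : ι → ℝ)
    (h : ∀ i, μ i = N * (Real.exp (c i) / (1 + ∑ j, Real.exp (c j)))) :
    blockG N c μ = N * Real.log (1 + ∑ j, Real.exp (c j)) := by
  have hs : 0 < 1 + ∑ j, Real.exp (c j) := sexp_pos c
  have hμ : ∀ i, 0 ≤ μ i := fun i => by rw [h i]; positivity
  have hsumeq : ∑ i, μ i = N * (1 - 1 / (1 + ∑ j, Real.exp (c j))) := by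
    rw [Finset.sum_congr rfl fun i _ => h i]; exact blockG_sum_eq N c
  have hsum : ∑ i, μ i ≤ N := by
    rw [hsumeq]
    have h01 : 0 < 1 / (1 + ∑ j, Real.exp (c j)) := by positivity
    nlinarith [h01]
  have hid := block_id N hN c μ hμ hsum
  have h1 : ∑ i, Dkl (μ i) (N * (Real.exp (c i) / (1 + ∑ j, Real.exp (c j)))) = 0 :=
    Finset.sum_eq_zero fun i _ => by rw [h i]; exact Dkl_self (by positivity)
  have h2 : Dkl (N - ∑ i, μ i) (N * (1 / (1 + ∑ j, Real.exp (c j)))) = 0 := by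
    have : N - ∑ i, μ i = N * (1 / (1 + ∑ j, Real.exp (c j))) := by rw [hsumeq]; ring
    rw [this]; exact Dkl_self (by positivity)
  linarith

lemma blockG_eq_imp (N : ℝ) (hN : 0 < N) (c μ : ι → ℝ) (hμ : ∀ i, 0 ≤ μ i)
    (hsum : ∑ i, μ i ≤ N)
    (h : blockG N c μ = N * Real.log (1 + ∑ j, Real.exp (c j))) :
    ∀ i, μ i = N * (Real.exp (c i) / (1 + ∑ j, Real.exp (c j))) := by
  have hs : 0 < 1 + ∑ j, Real.exp (c j) := sexp_pos c
  have hid := block_id N hN c μ hμ hsum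
  rw [h] at hid
  have h2 : 0 ≤ Dkl (N - ∑ i, μ i) (N * (1 / (1 + ∑ j, Real.exp (c j)))) :=
    Dkl_nonneg (by linarith) (by positivity)
  have h1 : ∑ i, Dkl (μ i) (N * (Real.exp (c i) / (1 + ∑ j, Real.exp (c j)))) = 0 := by
    have h1' : 0 ≤ ∑ i, Dkl (μ i) (N * (Real.exp (c i) / (1 + ∑ j, Real.exp (c j)))) :=
      Finset.sum_nonneg fun i _ => Dkl_nonneg (hμ i) (by positivity)
    linarith
  intro i
  have := (Finset.sum_eq_zero_iff_of_nonneg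
    (fun i _ => Dkl_nonneg (hμ i) (by positivity))).mp h1 i (Finset.mem_univ i)
  exact eq_of_Dkl_eq_zero (hμ i) (by positivity) this

end AuxForLogit

lemma sum_le_pointwise_eq {ι : Type*} [Fintype ι] {f g : ι → ℝ} (hle : ∀ i, f i ≤ g i)
    (heq : ∑ i, f i = ∑ i, g i) : ∀ i, f i = g i := by
  intro i
  have h0 : ∑ i, (g i - f i) = 0 := by rw [Finset.sum_sub_distrib, heq]; ring
  have := (Finset.sum_eq_zero_iff_of_nonneg
    (fun i _ => sub_nonneg.mpr (hle i))).mp h0 i (Finset.mem_univ i)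
  linarith


variable {X Y Z : Type*} [Fintype X] [Fintype Y] [Fintype Z]
  [Nonempty X] [Nonempty Y] [Nonempty Z]

/-- A pair of supply/demand functions is a feasible flow. -/
def FeasibleFlow (n : X → ℝ) (m : Y → ℝ) (μs : X → Z → ℝ) (μd : Z → Y → ℝ) : Prop :=
  (∀ x z, 0 ≤ μs x z) ∧ (∀ z y, 0 ≤ μd z y) ∧
    (∀ x, ∑ z, μs x z ≤ n x) ∧ (∀ y, ∑ z, μd z y ≤ m y) ∧
    (∀ z, ∑ x, μs x z = ∑ y, μd z y)

/-- The dual welfare function over prices in the Logit specification. -/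
noncomputable def Wlogit (n : X → ℝ) (m : Y → ℝ) (α : X → Z → ℝ) (γ : Z → Y → ℝ)
    (p : Z → ℝ) : ℝ :=
  (∑ x, n x * Real.log (1 + ∑ z, Real.exp (α x z + p z))) +
    ∑ y, m y * Real.log (1 + ∑ z, Real.exp (γ z y - p z))

/-- Generalized entropy of a flow in the Logit specification (note that in Lean
`0 * Real.log 0 = 0`, which implements the convention `0 · log 0 = 0`). -/
noncomputable def entropyE (n : X → ℝ) (m : Y → ℝ)
    (μs : X → Z → ℝ) (μd : Z → Y → ℝ) : ℝ :=
  (∑ x, ((∑ z, μs x z * Real.log (μs x z / n x)) +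
      (n x - ∑ z, μs x z) * Real.log ((n x - ∑ z, μs x z) / n x))) +
    ∑ y, ((∑ z, μd z y * Real.log (μd z y / m y)) +
      (m y - ∑ z, μd z y) * Real.log ((m y - ∑ z, μd z y) / m y))

/-- The entropic social welfare of a flow in the Logit specification. -/
noncomputable def entWelfare (n : X → ℝ) (m : Y → ℝ) (α : X → Z → ℝ) (γ : Z → Y → ℝ)
    (μs : X → Z → ℝ) (μd : Z → Y → ℝ) : ℝ :=
  (∑ x, ∑ z, μs x z * α x z) + (∑ z, ∑ y, μd z y * γ z y) - entropyE n m μs μd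


section AuxForLogit2

open Finset Real Filter

variable {X Y Z : Type*} [Fintype X] [Fintype Y] [Fintype Z]

lemma master (n : X → ℝ) (m : Y → ℝ) (α : X → Z → ℝ) (γ : Z → Y → ℝ)
    (μs : X → Z → ℝ) (μd : Z → Y → ℝ) (p : Z → ℝ) :
    entWelfare n m α γ μs μd =
      (∑ x, blockG (n x) (fun z => α x z + p z) (μs x)) +
        (∑ y, blockG (m y) (fun z => γ z y - p z) (fun z => μd z y)) +
        ∑ z, p z * ((∑ y, μd z y) - ∑ x, μs x z) := by
  have hA : ∑ x, ∑ z, μs x z * (α x z + p z) =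
      (∑ x, ∑ z, μs x z * α x z) + ∑ z, p z * ∑ x, μs x z := by
    simp_rw [mul_add, Finset.sum_add_distrib]
    congr 1
    rw [Finset.sum_comm]
    exact Finset.sum_congr rfl fun z _ => by
      rw [Finset.mul_sum]
      exact Finset.sum_congr rfl fun x _ => mul_comm _ _
  have hB : ∑ y, ∑ z, μd z y * (γ z y - p z) =
      (∑ z, ∑ y, μd z y * γ z y) - ∑ z, p z * ∑ y, μd z y := by
    simp_rw [mul_sub, Finset.sum_sub_distrib]
    congr 1
    · rw [Finset.sum_comm]
    · rw [Finset.sum_comm]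
      exact Finset.sum_congr rfl fun z _ => by
        rw [Finset.mul_sum]
        exact Finset.sum_congr rfl fun y _ => mul_comm _ _
  simp only [entWelfare, entropyE, blockG]
  rw [Finset.sum_sub_distrib, Finset.sum_sub_distrib, hA, hB]
  simp_rw [mul_sub, Finset.sum_sub_distrib]
  ring

lemma Wlogit_hasDerivAt [DecidableEq Z] (n : X → ℝ) (m : Y → ℝ) (α : X → Z → ℝ)
    (γ : Z → Y → ℝ) (p : Z → ℝ) (z₀ : Z) :
    HasDerivAt (fun t : ℝ =>
        Wlogit n m α γ (fun z => p z + t * (if z = z₀ then 1 else 0)))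
      ((∑ x, n x * (Real.exp (α x z₀ + p z₀) / (1 + ∑ z', Real.exp (α x z' + p z')))) -
        ∑ y, m y * (Real.exp (γ z₀ y - p z₀) / (1 + ∑ z', Real.exp (γ z' y - p z')))) 0 := by
  set d : Z → ℝ := fun z => if z = z₀ then 1 else 0 with hd
  have hx : ∀ x : X, HasDerivAt
      (fun t : ℝ => n x * Real.log (1 + ∑ z, Real.exp (α x z + (p z + t * d z))))
      (n x * ((∑ z, Real.exp (α x z + p z) * d z) / (1 + ∑ z', Real.exp (α x z' + p z')))) 0 := by
    intro x
    have h1 : ∀ z : Z, HasDerivAt (fun t : ℝ => Real.exp (α x z + (p z + t * d z)))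
        (Real.exp (α x z + p z) * d z) 0 := by
      intro z
      have ha : HasDerivAt (fun t : ℝ => α x z + (p z + t * d z)) (d z) 0 := by
        simpa using (((hasDerivAt_id (0:ℝ)).mul_const (d z)).const_add (p z)).const_add (α x z)
      simpa using ha.exp
    have h2 : HasDerivAt (fun t : ℝ => 1 + ∑ z, Real.exp (α x z + (p z + t * d z)))
        (∑ z, Real.exp (α x z + p z) * d z) 0 := by
      simpa using (HasDerivAt.fun_sum (fun z _ => h1 z)).const_add 1
    have hne : (fun t : ℝ => 1 + ∑ z, Real.exp (α x z + (p z + t * d z))) 0 ≠ 0 := by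
      positivity
    have h3 := (h2.log hne).const_mul (n x)
    simpa using h3
  have hy : ∀ y : Y, HasDerivAt
      (fun t : ℝ => m y * Real.log (1 + ∑ z, Real.exp (γ z y - (p z + t * d z))))
      (m y * ((∑ z, Real.exp (γ z y - p z) * (-d z)) /
        (1 + ∑ z', Real.exp (γ z' y - p z')))) 0 := by
    intro y
    have h1 : ∀ z : Z, HasDerivAt (fun t : ℝ => Real.exp (γ z y - (p z + t * d z)))
        (Real.exp (γ z y - p z) * (-d z)) 0 := by
      intro z
      have ha : HasDerivAt (fun t : ℝ => γ z y - (p z + t * d z)) (-d z) 0 := by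
        simpa using (((hasDerivAt_id (0:ℝ)).mul_const (d z)).const_add (p z)).const_sub (γ z y)
      simpa using ha.exp
    have h2 : HasDerivAt (fun t : ℝ => 1 + ∑ z, Real.exp (γ z y - (p z + t * d z)))
        (∑ z, Real.exp (γ z y - p z) * (-d z)) 0 := by
      simpa using (HasDerivAt.fun_sum (fun z _ => h1 z)).const_add 1
    have hne : (fun t : ℝ => 1 + ∑ z, Real.exp (γ z y - (p z + t * d z))) 0 ≠ 0 := by
      positivity
    have h3 := (h2.log hne).const_mul (m y)
    simpa using h3
  have hsum := (HasDerivAt.fun_sum (fun x (_ : x ∈ Finset.univ) => hx x)).add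
    (HasDerivAt.fun_sum (fun y (_ : y ∈ Finset.univ) => hy y))
  have hrw : ∀ f : Z → ℝ, (∑ z, f z * d z) = f z₀ := by
    intro f
    simp [hd, mul_ite, mul_one, mul_zero]
  have hrw2 : ∀ f : Z → ℝ, (∑ z, f z * (-d z)) = -f z₀ := by
    intro f
    simp [hd, mul_ite, mul_one, mul_zero]
  refine hsum.congr_deriv ?_
  simp only [hrw, hrw2]
  simp [mul_neg, Finset.sum_neg_distrib, sub_eq_add_neg, neg_div]

lemma clearing_of_min (n : X → ℝ) (m : Y → ℝ) (α : X → Z → ℝ) (γ : Z → Y → ℝ)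
    (p : Z → ℝ) (hp : ∀ q : Z → ℝ, Wlogit n m α γ p ≤ Wlogit n m α γ q) (z₀ : Z) :
    (∑ x, n x * (Real.exp (α x z₀ + p z₀) / (1 + ∑ z', Real.exp (α x z' + p z')))) =
      ∑ y, m y * (Real.exp (γ z₀ y - p z₀) / (1 + ∑ z', Real.exp (γ z' y - p z'))) := by
  classical
  have hd := Wlogit_hasDerivAt n m α γ p z₀
  have hmin : IsLocalMin (fun t : ℝ =>
      Wlogit n m α γ (fun z => p z + t * (if z = z₀ then 1 else 0))) 0 := by
    apply Filter.Eventually.of_forall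
    intro t
    have h0 : (fun z => p z + (0:ℝ) * (if z = z₀ then 1 else 0)) = p := by
      funext z; ring
    simpa [h0] using hp (fun z => p z + t * (if z = z₀ then 1 else 0))
  have := hmin.hasDerivAt_eq_zero hd
  linarith [this]

lemma Wlogit_continuous (n : X → ℝ) (m : Y → ℝ) (α : X → Z → ℝ) (γ : Z → Y → ℝ) :
    Continuous (Wlogit n m α γ) := by
  unfold Wlogit
  apply Continuous.add
  · apply continuous_finset_sum
    intro x _
    apply Continuous.mul continuous_const
    apply Continuous.log
    · exact continuous_const.add (continuous_finset_sum _ fun z _ =>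
        Real.continuous_exp.comp (continuous_const.add (continuous_apply z)))
    · intro q; positivity
  · apply continuous_finset_sum
    intro y _
    apply Continuous.mul continuous_const
    apply Continuous.log
    · exact continuous_const.add (continuous_finset_sum _ fun z _ =>
        Real.continuous_exp.comp (continuous_const.sub (continuous_apply z)))
    · intro q; positivity

set_option maxHeartbeats 1000000 in
lemma Wlogit_exists_min [Nonempty X] [Nonempty Y] [Nonempty Z] (n : X → ℝ) (m : Y → ℝ)
    (hn : ∀ x, 0 < n x) (hm : ∀ y, 0 < m y) (α : X → Z → ℝ) (γ : Z → Y → ℝ) :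
    ∃ p : Z → ℝ, ∀ q : Z → ℝ, Wlogit n m α γ p ≤ Wlogit n m α γ q := by
  obtain ⟨x₀⟩ := (inferInstance : Nonempty X)
  obtain ⟨y₀⟩ := (inferInstance : Nonempty Y)
  set c : ℝ := min (n x₀) (m y₀) with hc_def
  have hc : 0 < c := lt_min (hn x₀) (hm y₀)
  set C : ℝ := ∑ z, (n x₀ * |α x₀ z| + m y₀ * |γ z y₀|) with hC_def
  have hterm_nonneg : ∀ (N : ℝ) (f : Z → ℝ), 0 ≤ N →
      0 ≤ N * Real.log (1 + ∑ z, Real.exp (f z)) := by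
    intro N f hN
    apply mul_nonneg hN
    apply Real.log_nonneg
    have : 0 ≤ ∑ z, Real.exp (f z) := Finset.sum_nonneg fun z _ => (Real.exp_pos _).le
    linarith
  have key : ∀ p : Z → ℝ, c * ‖p‖ - C ≤ Wlogit n m α γ p := by
    intro p
    obtain ⟨z, hz⟩ : ∃ z : Z, ‖p‖ = |p z| := by
      obtain ⟨z, -, hz⟩ := Finset.exists_mem_eq_sup Finset.univ univ_nonempty (fun z => ‖p z‖₊)
      exact ⟨z, by rw [Pi.norm_def, hz]; simp⟩
    have hCz : n x₀ * |α x₀ z| + m y₀ * |γ z y₀| ≤ C := by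
      rw [hC_def]
      apply Finset.single_le_sum (f := fun z => n x₀ * |α x₀ z| + m y₀ * |γ z y₀|)
        (fun z _ => add_nonneg (mul_nonneg (hn x₀).le (abs_nonneg _))
          (mul_nonneg (hm y₀).le (abs_nonneg _))) (Finset.mem_univ z)
    have hbound1 : n x₀ * (α x₀ z + p z) ≤ Wlogit n m α γ p := by
      have h1 : Real.exp (α x₀ z + p z) ≤ 1 + ∑ z', Real.exp (α x₀ z' + p z') := by
        have := Finset.single_le_sum (f := fun z' => Real.exp (α x₀ z' + p z'))
          (fun z' _ => (Real.exp_pos _).le) (Finset.mem_univ z)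
        linarith
      have h2 : α x₀ z + p z ≤ Real.log (1 + ∑ z', Real.exp (α x₀ z' + p z')) := by
        rw [← Real.log_exp (α x₀ z + p z)]
        exact Real.log_le_log (Real.exp_pos _) h1
      have h3 : n x₀ * (α x₀ z + p z) ≤
          n x₀ * Real.log (1 + ∑ z', Real.exp (α x₀ z' + p z')) :=
        mul_le_mul_of_nonneg_left h2 (hn x₀).le
      have h4 : n x₀ * Real.log (1 + ∑ z', Real.exp (α x₀ z' + p z')) ≤
          ∑ x, n x * Real.log (1 + ∑ z', Real.exp (α x z' + p z')) :=
        Finset.single_le_sum (f := fun x => n x * Real.log (1 + ∑ z', Real.exp (α x z' + p z')))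
          (fun x _ => hterm_nonneg (n x) _ (hn x).le) (Finset.mem_univ x₀)
      have h5 : 0 ≤ ∑ y, m y * Real.log (1 + ∑ z', Real.exp (γ z' y - p z')) :=
        Finset.sum_nonneg fun y _ => hterm_nonneg (m y) _ (hm y).le
      unfold Wlogit; linarith
    have hbound2 : m y₀ * (γ z y₀ - p z) ≤ Wlogit n m α γ p := by
      have h1 : Real.exp (γ z y₀ - p z) ≤ 1 + ∑ z', Real.exp (γ z' y₀ - p z') := by
        have := Finset.single_le_sum (f := fun z' => Real.exp (γ z' y₀ - p z'))
          (fun z' _ => (Real.exp_pos _).le) (Finset.mem_univ z)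
        linarith
      have h2 : γ z y₀ - p z ≤ Real.log (1 + ∑ z', Real.exp (γ z' y₀ - p z')) := by
        rw [← Real.log_exp (γ z y₀ - p z)]
        exact Real.log_le_log (Real.exp_pos _) h1
      have h3 : m y₀ * (γ z y₀ - p z) ≤
          m y₀ * Real.log (1 + ∑ z', Real.exp (γ z' y₀ - p z')) :=
        mul_le_mul_of_nonneg_left h2 (hm y₀).le
      have h4 : m y₀ * Real.log (1 + ∑ z', Real.exp (γ z' y₀ - p z')) ≤
          ∑ y, m y * Real.log (1 + ∑ z', Real.exp (γ z' y - p z')) :=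
        Finset.single_le_sum (f := fun y => m y * Real.log (1 + ∑ z', Real.exp (γ z' y - p z')))
          (fun y _ => hterm_nonneg (m y) _ (hm y).le) (Finset.mem_univ y₀)
      have h5 : 0 ≤ ∑ x, n x * Real.log (1 + ∑ z', Real.exp (α x z' + p z')) :=
        Finset.sum_nonneg fun x _ => hterm_nonneg (n x) _ (hn x).le
      unfold Wlogit; linarith
    rw [hz]
    rcases abs_cases (p z) with ⟨habs, hsign⟩ | ⟨habs, hsign⟩
    · rw [habs]
      have hc1 : c ≤ n x₀ := min_le_left _ _
      have : c * p z ≤ n x₀ * p z := mul_le_mul_of_nonneg_right hc1 hsign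
      have habs1 : -|α x₀ z| ≤ α x₀ z := neg_abs_le _
      nlinarith [abs_nonneg (γ z y₀), (hm y₀).le, mul_nonneg (hm y₀).le (abs_nonneg (γ z y₀)),
        mul_le_mul_of_nonneg_left habs1 (hn x₀).le]
    · rw [habs]
      have hc2 : c ≤ m y₀ := min_le_right _ _
      have : c * (-p z) ≤ m y₀ * (-p z) := mul_le_mul_of_nonneg_right hc2 (by linarith)
      have habs2 : -|γ z y₀| ≤ γ z y₀ := neg_abs_le _
      nlinarith [abs_nonneg (α x₀ z), mul_nonneg (hn x₀).le (abs_nonneg (α x₀ z)),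
        mul_le_mul_of_nonneg_left habs2 (hm y₀).le]
  apply (Wlogit_continuous n m α γ).exists_forall_le
  have h1 : Tendsto (fun p : Z → ℝ => c * ‖p‖ - C) (cocompact (Z → ℝ)) atTop := by
    apply tendsto_atTop_add_const_right
    exact (tendsto_norm_cocompact_atTop).const_mul_atTop hc
  exact tendsto_atTop_mono key h1

lemma star_feasible (n : X → ℝ) (m : Y → ℝ) (hn : ∀ x, 0 < n x) (hm : ∀ y, 0 < m y)
    (α : X → Z → ℝ) (γ : Z → Y → ℝ) (p : Z → ℝ)
    (hp : ∀ q : Z → ℝ, Wlogit n m α γ p ≤ Wlogit n m α γ q) :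
    FeasibleFlow n m
      (fun x z => n x * (Real.exp (α x z + p z) / (1 + ∑ z', Real.exp (α x z' + p z'))))
      (fun z y => m y * (Real.exp (γ z y - p z) / (1 + ∑ z', Real.exp (γ z' y - p z')))) := by
  refine ⟨fun x z => mul_nonneg (hn x).le (by positivity),
    fun z y => mul_nonneg (hm y).le (by positivity), ?_, ?_, ?_⟩
  · intro x
    have h := blockG_sum_eq (n x) (fun z => α x z + p z)
    have h01 : 0 < 1 / (1 + ∑ j, Real.exp (α x j + p j)) := by positivity
    calc ∑ z, n x * (Real.exp (α x z + p z) / (1 + ∑ z', Real.exp (α x z' + p z')))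
        = n x * (1 - 1 / (1 + ∑ j, Real.exp (α x j + p j))) := h
      _ ≤ n x := by nlinarith [(hn x).le]
  · intro y
    have h := blockG_sum_eq (m y) (fun z => γ z y - p z)
    have h01 : 0 < 1 / (1 + ∑ j, Real.exp (γ j y - p j)) := by positivity
    calc ∑ z, m y * (Real.exp (γ z y - p z) / (1 + ∑ z', Real.exp (γ z' y - p z')))
        = m y * (1 - 1 / (1 + ∑ j, Real.exp (γ j y - p j))) := h
      _ ≤ m y := by nlinarith [(hm y).le]
  · intro z
    exact clearing_of_min n m α γ p hp z

lemma duality_le (n : X → ℝ) (m : Y → ℝ) (hn : ∀ x, 0 < n x) (hm : ∀ y, 0 < m y)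
    (α : X → Z → ℝ) (γ : Z → Y → ℝ) (μs : X → Z → ℝ) (μd : Z → Y → ℝ) (p : Z → ℝ)
    (hf : FeasibleFlow n m μs μd) :
    entWelfare n m α γ μs μd ≤ Wlogit n m α γ p := by
  obtain ⟨h1, h2, h3, h4, h5⟩ := hf
  rw [master n m α γ μs μd p]
  have hprice : ∑ z, p z * ((∑ y, μd z y) - ∑ x, μs x z) = 0 :=
    Finset.sum_eq_zero fun z _ => by rw [← h5 z]; ring
  rw [hprice, add_zero]
  unfold Wlogit
  refine add_le_add ?_ ?_
  · exact Finset.sum_le_sum fun x _ =>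
      blockG_le (n x) (hn x) _ _ (fun z => h1 x z) (h3 x)
  · exact Finset.sum_le_sum fun y _ =>
      blockG_le (m y) (hm y) _ _ (fun z => h2 z y) (h4 y)

lemma star_welfare_eq (n : X → ℝ) (m : Y → ℝ) (hn : ∀ x, 0 < n x) (hm : ∀ y, 0 < m y)
    (α : X → Z → ℝ) (γ : Z → Y → ℝ) (p : Z → ℝ)
    (hclear : ∀ z, (∑ x, n x * (Real.exp (α x z + p z) / (1 + ∑ z', Real.exp (α x z' + p z')))) =
      ∑ y, m y * (Real.exp (γ z y - p z) / (1 + ∑ z', Real.exp (γ z' y - p z')))) :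
    entWelfare n m α γ
      (fun x z => n x * (Real.exp (α x z + p z) / (1 + ∑ z', Real.exp (α x z' + p z'))))
      (fun z y => m y * (Real.exp (γ z y - p z) / (1 + ∑ z', Real.exp (γ z' y - p z')))) =
      Wlogit n m α γ p := by
  rw [master]
  have hprice : ∑ z, p z * ((∑ y, m y * (Real.exp (γ z y - p z) /
      (1 + ∑ z', Real.exp (γ z' y - p z')))) -
      ∑ x, n x * (Real.exp (α x z + p z) / (1 + ∑ z', Real.exp (α x z' + p z')))) = 0 :=
    Finset.sum_eq_zero fun z _ => by rw [← hclear z]; ring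
  rw [hprice, add_zero]
  unfold Wlogit
  congr 1
  · exact Finset.sum_congr rfl fun x _ => blockG_eq_of (n x) (hn x) _ _ (fun z => rfl)
  · exact Finset.sum_congr rfl fun y _ => blockG_eq_of (m y) (hm y) _ _ (fun z => rfl)

lemma duality_eq_imp (n : X → ℝ) (m : Y → ℝ) (hn : ∀ x, 0 < n x) (hm : ∀ y, 0 < m y)
    (α : X → Z → ℝ) (γ : Z → Y → ℝ) (μs : X → Z → ℝ) (μd : Z → Y → ℝ) (p : Z → ℝ)
    (hf : FeasibleFlow n m μs μd)
    (heq : entWelfare n m α γ μs μd = Wlogit n m α γ p) :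
    μs = (fun x z => n x * (Real.exp (α x z + p z) / (1 + ∑ z', Real.exp (α x z' + p z')))) ∧
      μd = fun z y => m y * (Real.exp (γ z y - p z) / (1 + ∑ z', Real.exp (γ z' y - p z'))) := by
  obtain ⟨h1, h2, h3, h4, h5⟩ := hf
  have hm1 := master n m α γ μs μd p
  have hprice : ∑ z, p z * ((∑ y, μd z y) - ∑ x, μs x z) = 0 :=
    Finset.sum_eq_zero fun z _ => by rw [← h5 z]; ring
  rw [hprice, add_zero, heq] at hm1
  have hAle : ∀ x, blockG (n x) (fun z => α x z + p z) (μs x) ≤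
      n x * Real.log (1 + ∑ z', Real.exp (α x z' + p z')) := fun x =>
    blockG_le (n x) (hn x) _ _ (fun z => h1 x z) (h3 x)
  have hBle : ∀ y, blockG (m y) (fun z => γ z y - p z) (fun z => μd z y) ≤
      m y * Real.log (1 + ∑ z', Real.exp (γ z' y - p z')) := fun y =>
    blockG_le (m y) (hm y) _ _ (fun z => h2 z y) (h4 y)
  have hA : ∑ x, blockG (n x) (fun z => α x z + p z) (μs x) ≤
      ∑ x, n x * Real.log (1 + ∑ z', Real.exp (α x z' + p z')) :=
    Finset.sum_le_sum fun x _ => hAle x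
  have hB : ∑ y, blockG (m y) (fun z => γ z y - p z) (fun z => μd z y) ≤
      ∑ y, m y * Real.log (1 + ∑ z', Real.exp (γ z' y - p z')) :=
    Finset.sum_le_sum fun y _ => hBle y
  have hWdef : Wlogit n m α γ p =
      (∑ x, n x * Real.log (1 + ∑ z', Real.exp (α x z' + p z'))) +
        ∑ y, m y * Real.log (1 + ∑ z', Real.exp (γ z' y - p z')) := rfl
  rw [hWdef] at hm1
  have heqA : ∑ x, blockG (n x) (fun z => α x z + p z) (μs x) =
      ∑ x, n x * Real.log (1 + ∑ z', Real.exp (α x z' + p z')) := by linarith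
  have heqB : ∑ y, blockG (m y) (fun z => γ z y - p z) (fun z => μd z y) =
      ∑ y, m y * Real.log (1 + ∑ z', Real.exp (γ z' y - p z')) := by linarith
  constructor
  · funext x z
    have hx := sum_le_pointwise_eq hAle heqA x
    exact blockG_eq_imp (n x) (hn x) _ _ (fun z => h1 x z) (h3 x) hx z
  · funext z y
    have hy := sum_le_pointwise_eq hBle heqB y
    exact blockG_eq_imp (m y) (hm y) _ _ (fun z => h2 z y) (h4 y) hy z

end AuxForLogit2

/-- Part of Theorem 3(iii): the entropic welfare has a unique maximizer over feasible flows,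
which is given in closed form from any minimizer of the dual welfare over prices. -/
theorem logit_equilibrium_flow_unique (n : X → ℝ) (m : Y → ℝ)
    (hn : ∀ x, 0 < n x) (hm : ∀ y, 0 < m y) (α : X → Z → ℝ) (γ : Z → Y → ℝ) :
    (∃! μ : (X → Z → ℝ) × (Z → Y → ℝ), FeasibleFlow n m μ.1 μ.2 ∧
        ∀ (μs' : X → Z → ℝ) (μd' : Z → Y → ℝ), FeasibleFlow n m μs' μd' →
          entWelfare n m α γ μs' μd' ≤ entWelfare n m α γ μ.1 μ.2) ∧
      ∀ p : Z → ℝ, (∀ q : Z → ℝ, Wlogit n m α γ p ≤ Wlogit n m α γ q) →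
        ∀ μ : (X → Z → ℝ) × (Z → Y → ℝ),
          (FeasibleFlow n m μ.1 μ.2 ∧
            ∀ (μs' : X → Z → ℝ) (μd' : Z → Y → ℝ), FeasibleFlow n m μs' μd' →
              entWelfare n m α γ μs' μd' ≤ entWelfare n m α γ μ.1 μ.2) →
          μ.1 = (fun x z => n x *
              (Real.exp (α x z + p z) / (1 + ∑ z', Real.exp (α x z' + p z')))) ∧
            μ.2 = fun z y => m y *
              (Real.exp (γ z y - p z) / (1 + ∑ z', Real.exp (γ z' y - p z'))) := by
  have hstar : ∀ p : Z → ℝ, (∀ q : Z → ℝ, Wlogit n m α γ p ≤ Wlogit n m α γ q) →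
      FeasibleFlow n m
        (fun x z => n x * (Real.exp (α x z + p z) / (1 + ∑ z', Real.exp (α x z' + p z'))))
        (fun z y => m y * (Real.exp (γ z y - p z) / (1 + ∑ z', Real.exp (γ z' y - p z')))) ∧
      entWelfare n m α γ
        (fun x z => n x * (Real.exp (α x z + p z) / (1 + ∑ z', Real.exp (α x z' + p z'))))
        (fun z y => m y * (Real.exp (γ z y - p z) / (1 + ∑ z', Real.exp (γ z' y - p z')))) =
        Wlogit n m α γ p := by
    intro p hp
    have hfeas := star_feasible n m hn hm α γ p hp
    exact ⟨hfeas, star_welfare_eq n m hn hm α γ p (fun z => clearing_of_min n m α γ p hp z)⟩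
  obtain ⟨p₀, hp₀⟩ := Wlogit_exists_min n m hn hm α γ
  obtain ⟨hfeas₀, heq₀⟩ := hstar p₀ hp₀
  constructor
  · refine ⟨(fun x z => n x * (Real.exp (α x z + p₀ z) / (1 + ∑ z', Real.exp (α x z' + p₀ z'))),
      fun z y => m y * (Real.exp (γ z y - p₀ z) / (1 + ∑ z', Real.exp (γ z' y - p₀ z')))),
      ⟨hfeas₀, ?_⟩, ?_⟩
    · intro μs' μd' hf'
      calc entWelfare n m α γ μs' μd' ≤ Wlogit n m α γ p₀ :=
            duality_le n m hn hm α γ μs' μd' p₀ hf'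
        _ = _ := heq₀.symm
    · rintro ⟨μs1, μd1⟩ ⟨hf1, hmax1⟩
      have hle : entWelfare n m α γ μs1 μd1 ≤ Wlogit n m α γ p₀ :=
        duality_le n m hn hm α γ μs1 μd1 p₀ hf1
      have hge : Wlogit n m α γ p₀ ≤ entWelfare n m α γ μs1 μd1 := by
        rw [← heq₀]
        exact hmax1 _ _ hfeas₀
      obtain ⟨e1, e2⟩ := duality_eq_imp n m hn hm α γ μs1 μd1 p₀ hf1 (le_antisymm hle hge)
      exact Prod.ext e1 e2
  · intro p hp μ hμ
    obtain ⟨hf1, hmax1⟩ := hμ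
    obtain ⟨hfeasp, heqp⟩ := hstar p hp
    have hle : entWelfare n m α γ μ.1 μ.2 ≤ Wlogit n m α γ p :=
      duality_le n m hn hm α γ μ.1 μ.2 p hf1
    have hge : Wlogit n m α γ p ≤ entWelfare n m α γ μ.1 μ.2 := by
      rw [← heqp]
      exact hmax1 _ _ hfeasp
    exact duality_eq_imp n m hn hm α γ μ.1 μ.2 p hf1 (le_antisymm hle hge)
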